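/- Let α ⊨ n and let E be an equivalence class of SRCT(α) under the equivalence relation ∼_α. Then E contains at least one source tableau and at least one sink tableau of shape α. -/

import Mathlib

/-- Cell `(r,c)` (0-indexed: row `r` from the top, column `c` from the left) of the
reverse composition diagram of the composition `α`. -/
def IsCell (α : List ℕ) (r c : ℕ) : Prop := r < α.length ∧ c < α.getD r 0

instance (α : List ℕ) (r c : ℕ) : Decidable (IsCell α r c) :=
  inferInstanceAs (Decidable (r < α.length ∧ c < α.getD r 0))

/-- A standard reverse composition tableau (SRCT) of shape `α`: a bijective filling of the
reverse composition diagram of `α` by `{1,…,α.sum}` (with the junk value `0` off the diagram)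
whose rows decrease from left to right, whose first column increases from top to bottom,
and which satisfies the triple rule. -/
structure SRCT (α : List ℕ) where
  entry : ℕ → ℕ → ℕ
  zero_off : ∀ r c, ¬ IsCell α r c → entry r c = 0
  one_le : ∀ r c, IsCell α r c → 1 ≤ entry r c
  le_sum : ∀ r c, IsCell α r c → entry r c ≤ α.sum
  inj : ∀ r c r' c', IsCell α r c → IsCell α r' c' → entry r c = entry r' c' → r = r' ∧ c = c'
  surj : ∀ m, 1 ≤ m → m ≤ α.sum → ∃ r c, IsCell α r c ∧ entry r c = m
  row_dec : ∀ r c, IsCell α r (c + 1) → entry r (c + 1) < entry r c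
  col1_inc : ∀ r r', r < r' → IsCell α r 0 → IsCell α r' 0 → entry r 0 < entry r' 0
  triple : ∀ r r' c, r < r' → IsCell α r c → IsCell α r' (c + 1) →
    entry r' (c + 1) < entry r c → IsCell α r (c + 1) ∧ entry r' (c + 1) < entry r (c + 1)

/-- `i` is a descent of `T`: `i+1` appears weakly right of `i`. -/
def Descent (α : List ℕ) (T : SRCT α) (i : ℕ) : Prop :=
  ∃ r c r' c', IsCell α r c ∧ IsCell α r' c' ∧
    T.entry r c = i ∧ T.entry r' c' = i + 1 ∧ c ≤ c'

/-- `i` and `i+1` are attacking in `T`: same column, or adjacent columns with `i+1`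
strictly southeast of `i`. -/
def Attacking (α : List ℕ) (T : SRCT α) (i : ℕ) : Prop :=
  ∃ r c r' c', IsCell α r c ∧ IsCell α r' c' ∧
    T.entry r c = i ∧ T.entry r' c' = i + 1 ∧ (c' = c ∨ (c' = c + 1 ∧ r < r'))

/-- The entry function of the filling `s_i(T)` obtained from `T` by interchanging the
positions of the entries `i` and `i+1`. -/
def swapEntry (α : List ℕ) (T : SRCT α) (i : ℕ) : ℕ → ℕ → ℕ := fun r c =>
  if T.entry r c = i then i + 1 else if T.entry r c = i + 1 then i else T.entry r c

def maxPart (α : List ℕ) : ℕ := α.foldr max 0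

/-- The entries of column `c` of `T`, read from top to bottom. -/
def colList (α : List ℕ) (T : SRCT α) (c : ℕ) : List ℕ :=
  (List.range α.length).filterMap fun r => if IsCell α r c then some (T.entry r c) else none

/-- The column word of `T`: entries of each column read top to bottom, columns left to right,
viewed as a permutation of `{1,…,n}` in one-line notation. -/
def colWord (α : List ℕ) (T : SRCT α) : List ℕ :=
  (List.range (maxPart α)).flatMap fun c => colList α T c

/-- The inversion set of a one-line word: pairs of positions `p < q` with `w_p > w_q`. -/
def invFinset (w : List ℕ) : Finset (ℕ × ℕ) :=
  (Finset.range w.length ×ˢ Finset.range w.length).filter fun pq =>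
    pq.1 < pq.2 ∧ w.getD pq.2 0 < w.getD pq.1 0

/-- The number of inversions, i.e. the Coxeter length of the one-line word. -/
def invCount (w : List ℕ) : ℕ := (invFinset w).card

/-- The standardization of a word with distinct letters, with ranks `1,…,len`. -/
def stdWord (w : List ℕ) : List ℕ :=
  w.map fun x => (w.filter fun y => decide (y ≤ x)).length

/-- The standardized column word of `T`: concatenation over columns (left to right) of the
standardizations of the column reading words (top to bottom). -/
def stWord (α : List ℕ) (T : SRCT α) : List ℕ :=
  (List.range (maxPart α)).flatMap fun c => stdWord (colList α T c)

/-- The equivalence class of `T0` under `∼_α` (equal standardized column words). -/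
def stClass (α : List ℕ) (T0 : SRCT α) : Set (SRCT α) := {T | stWord α T = stWord α T0}

/-- `T` is a source tableau: for every non-descent `i ≠ n`, the entry `i+1` lies in the cell
immediately to the left of the cell containing `i`. -/
def IsSource (α : List ℕ) (T : SRCT α) : Prop :=
  ∀ i, 1 ≤ i → i < α.sum → ¬ Descent α T i →
    ∃ r c, IsCell α r (c + 1) ∧ T.entry r c = i + 1 ∧ T.entry r (c + 1) = i

/-- `T` is a sink tableau: every descent of `T` is an attacking descent. -/
def IsSink (α : List ℕ) (T : SRCT α) : Prop := ∀ i, Descent α T i → Attacking α T i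

def gval (a b : ℕ) : ℕ → ℕ := fun x => if x = a then b else if x = b then a else x

lemma gval_gval {a b : ℕ} (hne : a ≠ b) (x : ℕ) : gval a b (gval a b x) = x := by
  unfold gval; split_ifs <;> omega

lemma gval_lt {a b x y : ℕ} (hab : b = a + 1 ∨ a = b + 1)
    (h1 : ¬(x = a ∧ y = b)) (h2 : ¬(x = b ∧ y = a)) :
    (gval a b x < gval a b y ↔ x < y) := by
  unfold gval; split_ifs <;> omega

def swapFun (α : List ℕ) (T : SRCT α) (rp cp rq cq : ℕ) : ℕ → ℕ → ℕ :=
  fun r c => if r = rp ∧ c = cp then T.entry rq cq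
    else if r = rq ∧ c = cq then T.entry rp cp
    else T.entry r c

lemma swapFun_eq_gval (α : List ℕ) (T : SRCT α) (rp cp rq cq : ℕ)
    (hP : IsCell α rp cp) (hQ : IsCell α rq cq)
    (hne : T.entry rp cp ≠ T.entry rq cq) :
    ∀ r c, IsCell α r c →
      swapFun α T rp cp rq cq r c = gval (T.entry rp cp) (T.entry rq cq) (T.entry r c) := by
  intro r c hc
  by_cases h1 : r = rp ∧ c = cp
  · obtain ⟨rfl, rfl⟩ := h1
    simp [swapFun, gval]
  · by_cases h2 : r = rq ∧ c = cq
    · obtain ⟨rfl, rfl⟩ := h2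
      simp [swapFun, gval, h1, hne.symm]
    · have hxa : T.entry r c ≠ T.entry rp cp := fun he => h1 (T.inj _ _ _ _ hc hP he)
      have hxb : T.entry r c ≠ T.entry rq cq := fun he => h2 (T.inj _ _ _ _ hc hQ he)
      simp [swapFun, gval, h1, h2, hxa, hxb]

lemma swap_srct (α : List ℕ) (T : SRCT α) (rp cp rq cq : ℕ)
    (hP : IsCell α rp cp) (hQ : IsCell α rq cq)
    (hcol : cp < cq) (hadj : cq = cp + 1 → rq < rp)
    (hval : T.entry rq cq = T.entry rp cp + 1 ∨ T.entry rp cp = T.entry rq cq + 1) :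
    ∃ T' : SRCT α, T'.entry = swapFun α T rp cp rq cq := by
  have hne : T.entry rp cp ≠ T.entry rq cq := by omega
  have hg := swapFun_eq_gval α T rp cp rq cq hP hQ hne
  refine ⟨⟨swapFun α T rp cp rq cq, ?_, ?_, ?_, ?_, ?_, ?_, ?_, ?_⟩, rfl⟩
  · -- zero_off
    intro r c h
    have h1 : ¬(r = rp ∧ c = cp) := by rintro ⟨rfl, rfl⟩; exact h hP
    have h2 : ¬(r = rq ∧ c = cq) := by rintro ⟨rfl, rfl⟩; exact h hQ
    unfold swapFun
    rw [if_neg h1, if_neg h2]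
    exact T.zero_off r c h
  · -- one_le
    intro r c h
    rw [hg r c h]
    unfold gval
    split_ifs
    · exact T.one_le _ _ hQ
    · exact T.one_le _ _ hP
    · exact T.one_le _ _ h
  · -- le_sum
    intro r c h
    rw [hg r c h]
    unfold gval
    split_ifs
    · exact T.le_sum _ _ hQ
    · exact T.le_sum _ _ hP
    · exact T.le_sum _ _ h
  · -- inj
    intro r c r' c' h h' he
    rw [hg r c h, hg r' c' h'] at he
    have h2 := congrArg (gval (T.entry rp cp) (T.entry rq cq)) he
    rw [gval_gval hne, gval_gval hne] at h2
    exact T.inj r c r' c' h h' h2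
  · -- surj
    intro m h1 h2
    have hr : 1 ≤ gval (T.entry rp cp) (T.entry rq cq) m ∧
        gval (T.entry rp cp) (T.entry rq cq) m ≤ α.sum := by
      unfold gval
      split_ifs
      · exact ⟨T.one_le _ _ hQ, T.le_sum _ _ hQ⟩
      · exact ⟨T.one_le _ _ hP, T.le_sum _ _ hP⟩
      · exact ⟨h1, h2⟩
    obtain ⟨r, c, hc, he⟩ := T.surj _ hr.1 hr.2
    exact ⟨r, c, hc, by rw [hg r c hc, he, gval_gval hne]⟩
  · -- row_dec
    intro r c h
    have hcl : IsCell α r c := ⟨h.1, by have := h.2; omega⟩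
    rw [hg _ _ h, hg _ _ hcl]
    refine (gval_lt hval ?_ ?_).mpr (T.row_dec r c h)
    · rintro ⟨hA, hB⟩
      obtain ⟨e1, e2⟩ := T.inj _ _ _ _ h hP hA
      obtain ⟨e3, e4⟩ := T.inj _ _ _ _ hcl hQ hB
      omega
    · rintro ⟨hA, hB⟩
      obtain ⟨e1, e2⟩ := T.inj _ _ _ _ h hQ hA
      obtain ⟨e3, e4⟩ := T.inj _ _ _ _ hcl hP hB
      have := hadj (by omega)
      omega
  · -- col1_inc
    intro r r' hrr h h'
    rw [hg _ _ h, hg _ _ h']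
    refine (gval_lt hval ?_ ?_).mpr (T.col1_inc r r' hrr h h')
    · rintro ⟨hA, hB⟩
      obtain ⟨e1, e2⟩ := T.inj _ _ _ _ h hP hA
      obtain ⟨e3, e4⟩ := T.inj _ _ _ _ h' hQ hB
      omega
    · rintro ⟨hA, hB⟩
      obtain ⟨e1, e2⟩ := T.inj _ _ _ _ h hQ hA
      obtain ⟨e3, e4⟩ := T.inj _ _ _ _ h' hP hB
      omega
  · -- triple
    intro r r' c hrr h h' hlt
    rw [hg _ _ h', hg _ _ h] at hlt
    have hlt' : T.entry r' (c + 1) < T.entry r c := by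
      refine (gval_lt hval ?_ ?_).mp hlt
      · rintro ⟨hA, hB⟩
        obtain ⟨e1, e2⟩ := T.inj _ _ _ _ h' hP hA
        obtain ⟨e3, e4⟩ := T.inj _ _ _ _ h hQ hB
        omega
      · rintro ⟨hA, hB⟩
        obtain ⟨e1, e2⟩ := T.inj _ _ _ _ h' hQ hA
        obtain ⟨e3, e4⟩ := T.inj _ _ _ _ h hP hB
        have := hadj (by omega)
        omega
    obtain ⟨hz, hzlt⟩ := T.triple r r' c hrr h h' hlt'
    refine ⟨hz, ?_⟩
    rw [hg _ _ h', hg _ _ hz]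
    refine (gval_lt hval ?_ ?_).mpr hzlt
    · rintro ⟨hA, hB⟩
      obtain ⟨e1, e2⟩ := T.inj _ _ _ _ h' hP hA
      obtain ⟨e3, e4⟩ := T.inj _ _ _ _ hz hQ hB
      omega
    · rintro ⟨hA, hB⟩
      obtain ⟨e1, e2⟩ := T.inj _ _ _ _ h' hQ hA
      obtain ⟨e3, e4⟩ := T.inj _ _ _ _ hz hP hB
      omega

lemma le_maxPart {α : List ℕ} {x : ℕ} (h : x ∈ α) : x ≤ maxPart α := by
  induction α with
  | nil => simp at h
  | cons a l ih =>
    unfold maxPart at *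
    simp only [List.foldr_cons]
    rcases List.mem_cons.mp h with rfl | h'
    · exact le_max_left _ _
    · exact le_trans (ih h') (le_max_right _ _)

lemma cell_col_lt {α : List ℕ} {r c : ℕ} (h : IsCell α r c) : c < maxPart α := by
  have hm : α.getD r 0 ∈ α := by
    rw [List.getD_eq_getElem α 0 h.1]
    exact List.getElem_mem _
  exact lt_of_lt_of_le h.2 (le_maxPart hm)

def mu (α : List ℕ) (T : SRCT α) : ℕ :=
  ∑ p ∈ Finset.range α.length ×ˢ Finset.range (maxPart α),
    if IsCell α p.1 p.2 then p.2 * T.entry p.1 p.2 else 0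

def muBound (α : List ℕ) : ℕ := α.length * maxPart α * (maxPart α * α.sum)

lemma mu_le (α : List ℕ) (T : SRCT α) : mu α T ≤ muBound α := by
  unfold mu muBound
  calc ∑ p ∈ Finset.range α.length ×ˢ Finset.range (maxPart α),
        (if IsCell α p.1 p.2 then p.2 * T.entry p.1 p.2 else 0)
      ≤ ∑ _p ∈ Finset.range α.length ×ˢ Finset.range (maxPart α), maxPart α * α.sum := by
        refine Finset.sum_le_sum fun p hp => ?_
        split_ifs with h
        · exact Nat.mul_le_mul (le_of_lt (Finset.mem_range.mp (Finset.mem_product.mp hp).2))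
            (T.le_sum _ _ h)
        · exact Nat.zero_le _
    _ = α.length * maxPart α * (maxPart α * α.sum) := by
        rw [Finset.sum_const, Finset.card_product, Finset.card_range, Finset.card_range,
          smul_eq_mul]

lemma mu_swap (α : List ℕ) (T T' : SRCT α) (rp cp rq cq : ℕ)
    (hP : IsCell α rp cp) (hQ : IsCell α rq cq) (hcol : cp < cq)
    (hT' : T'.entry = swapFun α T rp cp rq cq) :
    mu α T' + cp * T.entry rp cp + cq * T.entry rq cq
      = mu α T + cp * T.entry rq cq + cq * T.entry rp cp := by
  classical
  set S := Finset.range α.length ×ˢ Finset.range (maxPart α) with hS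
  have hPm : ((rp, cp) : ℕ × ℕ) ∈ S :=
    Finset.mem_product.mpr ⟨Finset.mem_range.mpr hP.1, Finset.mem_range.mpr (cell_col_lt hP)⟩
  have hPQ : ((rq, cq) : ℕ × ℕ) ≠ (rp, cp) := by
    simp only [ne_eq, Prod.mk.injEq, not_and]
    intro _; omega
  have hQm : ((rq, cq) : ℕ × ℕ) ∈ S.erase (rp, cp) :=
    Finset.mem_erase.mpr ⟨hPQ,
      Finset.mem_product.mpr ⟨Finset.mem_range.mpr hQ.1, Finset.mem_range.mpr (cell_col_lt hQ)⟩⟩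
  have key : ∀ U : SRCT α, mu α U =
      (if IsCell α rp cp then cp * U.entry rp cp else 0) +
      ((if IsCell α rq cq then cq * U.entry rq cq else 0) +
        ∑ p ∈ (S.erase (rp, cp)).erase (rq, cq),
          (if IsCell α p.1 p.2 then p.2 * U.entry p.1 p.2 else 0)) := by
    intro U
    unfold mu
    rw [← Finset.add_sum_erase _ _ hPm, ← Finset.add_sum_erase _ _ hQm]
  rw [key T, key T']
  have hrest : ∑ p ∈ (S.erase (rp, cp)).erase (rq, cq),
      (if IsCell α p.1 p.2 then p.2 * T'.entry p.1 p.2 else 0)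
      = ∑ p ∈ (S.erase (rp, cp)).erase (rq, cq),
      (if IsCell α p.1 p.2 then p.2 * T.entry p.1 p.2 else 0) := by
    refine Finset.sum_congr rfl fun p hp => ?_
    have hp1 : p ≠ ((rq, cq) : ℕ × ℕ) := (Finset.mem_erase.mp hp).1
    have hp2 : p ≠ ((rp, cp) : ℕ × ℕ) := (Finset.mem_erase.mp (Finset.mem_erase.mp hp).2).1
    have h1 : ¬(p.1 = rp ∧ p.2 = cp) := fun h => hp2 (Prod.ext h.1 h.2)
    have h2 : ¬(p.1 = rq ∧ p.2 = cq) := fun h => hp1 (Prod.ext h.1 h.2)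
    rw [hT']
    unfold swapFun
    simp only [if_neg h1, if_neg h2]
  have e1 : T'.entry rp cp = T.entry rq cq := by
    rw [hT']; unfold swapFun; simp
  have e2 : T'.entry rq cq = T.entry rp cp := by
    rw [hT']; unfold swapFun
    have : ¬(rq = rp ∧ cq = cp) := by intro h; omega
    simp [this]
  rw [hrest, if_pos hP, if_pos hQ, if_pos hP, if_pos hQ, e1, e2]
  ring

lemma mem_colList {α : List ℕ} {T : SRCT α} {c x : ℕ} :
    x ∈ colList α T c ↔ ∃ r, IsCell α r c ∧ T.entry r c = x := by
  unfold colList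
  simp only [List.mem_filterMap, List.mem_range]
  constructor
  · rintro ⟨r, hr, he⟩
    by_cases hc : IsCell α r c
    · rw [if_pos hc] at he
      exact ⟨r, hc, Option.some_inj.mp he⟩
    · rw [if_neg hc] at he
      simp at he
  · rintro ⟨r, hc, he⟩
    exact ⟨r, hc.1, by rw [if_pos hc, he]⟩

lemma colList_swap (α : List ℕ) (T T' : SRCT α) (rp cp rq cq : ℕ)
    (hP : IsCell α rp cp) (hQ : IsCell α rq cq)
    (hne : T.entry rp cp ≠ T.entry rq cq)
    (hT' : T'.entry = swapFun α T rp cp rq cq) (c : ℕ) :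
    colList α T' c = (colList α T c).map (gval (T.entry rp cp) (T.entry rq cq)) := by
  have hg := swapFun_eq_gval α T rp cp rq cq hP hQ hne
  unfold colList
  rw [List.map_filterMap]
  congr 1
  funext r
  by_cases h : IsCell α r c
  · rw [if_pos h, if_pos h, hT', hg r c h, Option.map_some]
  · rw [if_neg h, if_neg h, Option.map_none]

lemma stdWord_map_gval (a b : ℕ) (hab : b = a + 1 ∨ a = b + 1) (w : List ℕ)
    (hw : a ∉ w ∨ b ∉ w) : stdWord (w.map (gval a b)) = stdWord w := by
  unfold stdWord
  rw [List.map_map]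
  refine List.map_congr_left fun x hx => ?_
  simp only [Function.comp]
  rw [List.filter_map, List.length_map]
  refine congrArg List.length (List.filter_congr fun y hy => ?_)
  simp only [Function.comp]
  have hiff : (gval a b y ≤ gval a b x) ↔ (y ≤ x) := by
    rcases hw with h | h
    · have hxa : x ≠ a := fun e => h (e ▸ hx)
      have hya : y ≠ a := fun e => h (e ▸ hy)
      unfold gval; split_ifs <;> omega
    · have hxb : x ≠ b := fun e => h (e ▸ hx)
      have hyb : y ≠ b := fun e => h (e ▸ hy)
      unfold gval; split_ifs <;> omega
  exact decide_eq_decide.mpr hiff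

lemma stWord_swap (α : List ℕ) (T T' : SRCT α) (rp cp rq cq : ℕ)
    (hP : IsCell α rp cp) (hQ : IsCell α rq cq) (hcc : cp ≠ cq)
    (hval : T.entry rq cq = T.entry rp cp + 1 ∨ T.entry rp cp = T.entry rq cq + 1)
    (hT' : T'.entry = swapFun α T rp cp rq cq) :
    stWord α T' = stWord α T := by
  have hne : T.entry rp cp ≠ T.entry rq cq := by omega
  have key : ∀ c, stdWord (colList α T' c) = stdWord (colList α T c) := by
    intro c
    rw [colList_swap α T T' rp cp rq cq hP hQ hne hT' c]
    refine stdWord_map_gval _ _ hval _ ?_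
    by_cases ha : T.entry rp cp ∈ colList α T c
    · right
      intro hb
      obtain ⟨r1, hc1, he1⟩ := mem_colList.mp ha
      obtain ⟨r2, hc2, he2⟩ := mem_colList.mp hb
      obtain ⟨_, h1⟩ := T.inj _ _ _ _ hc1 hP he1
      obtain ⟨_, h2⟩ := T.inj _ _ _ _ hc2 hQ he2
      exact hcc (h1 ▸ h2 ▸ rfl)
    · exact Or.inl ha
  unfold stWord
  simp only [key]

lemma sink_step (α : List ℕ) (T : SRCT α) (h : ¬ IsSink α T) :
    ∃ T' : SRCT α, stWord α T' = stWord α T ∧ mu α T' < mu α T := by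
  unfold IsSink at h
  push_neg at h
  obtain ⟨i, hd, hna⟩ := h
  obtain ⟨r1, c1, r2, c2, h1, h2, e1, e2, hle⟩ := hd
  have hcc : c1 < c2 := by
    have hne : c1 ≠ c2 := fun hEq => hna ⟨r1, c1, r2, c2, h1, h2, e1, e2, Or.inl hEq.symm⟩
    omega
  have hadj : c2 = c1 + 1 → r2 < r1 := by
    intro hc
    rcases Nat.lt_trichotomy r1 r2 with h' | h' | h'
    · exact absurd ⟨r1, c1, r2, c2, h1, h2, e1, e2, Or.inr ⟨hc, h'⟩⟩ hna
    · exfalso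
      have hcell : IsCell α r1 (c1 + 1) := by rw [h', ← hc]; exact h2
      have hrd := T.row_dec r1 c1 hcell
      have hE : T.entry r1 (c1 + 1) = i + 1 := by rw [h', ← hc]; exact e2
      omega
    · exact h'
  have hval : T.entry r2 c2 = T.entry r1 c1 + 1 ∨ T.entry r1 c1 = T.entry r2 c2 + 1 :=
    Or.inl (by rw [e1, e2])
  obtain ⟨T', hT'⟩ := swap_srct α T r1 c1 r2 c2 h1 h2 hcc hadj hval
  refine ⟨T', stWord_swap α T T' r1 c1 r2 c2 h1 h2 (Nat.ne_of_lt hcc) hval hT', ?_⟩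
  have heq := mu_swap α T T' r1 c1 r2 c2 h1 h2 hcc hT'
  rw [e1, e2] at heq
  have h3 : c1 * (i + 1) = c1 * i + c1 := Nat.mul_succ _ _
  have h4 : c2 * (i + 1) = c2 * i + c2 := Nat.mul_succ _ _
  linarith

lemma source_step (α : List ℕ) (T : SRCT α) (h : ¬ IsSource α T) :
    ∃ T' : SRCT α, stWord α T' = stWord α T ∧ mu α T < mu α T' := by
  unfold IsSource at h
  push_neg at h
  obtain ⟨i, hi1, hi2, hnd, hne⟩ := h
  obtain ⟨r1, c1, h1, e1⟩ := T.surj i hi1 (Nat.le_of_lt hi2)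
  obtain ⟨r2, c2, h2, e2⟩ := T.surj (i + 1) (by omega) (by omega)
  have hcc : c2 < c1 := by
    by_contra hcon
    push_neg at hcon
    exact hnd ⟨r1, c1, r2, c2, h1, h2, e1, e2, hcon⟩
  have hadj : c1 = c2 + 1 → r1 < r2 := by
    intro hc
    rcases Nat.lt_trichotomy r1 r2 with h' | h' | h'
    · exact h'
    · exfalso
      have hcell : IsCell α r1 (c2 + 1) := by rw [← hc]; exact h1
      have hA : T.entry r1 c2 = i + 1 := by rw [h']; exact e2
      have hB : T.entry r1 (c2 + 1) = i := by rw [← hc]; exact e1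
      exact absurd hB (hne r1 c2 hcell hA)
    · exfalso
      have hcell : IsCell α r1 (c2 + 1) := by rw [← hc]; exact h1
      have hB : T.entry r1 (c2 + 1) = i := by rw [← hc]; exact e1
      have htr := T.triple r2 r1 c2 h' h2 hcell (by rw [hB, e2]; omega)
      obtain ⟨hz, hzlt⟩ := htr
      have hrd := T.row_dec r2 c2 hz
      rw [e2] at hrd
      omega
  have hval : T.entry r1 c1 = T.entry r2 c2 + 1 ∨ T.entry r2 c2 = T.entry r1 c1 + 1 :=
    Or.inr (by rw [e1, e2])
  obtain ⟨T', hT'⟩ := swap_srct α T r2 c2 r1 c1 h2 h1 hcc hadj hval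
  refine ⟨T', stWord_swap α T T' r2 c2 r1 c1 h2 h1 (Nat.ne_of_lt hcc) hval hT', ?_⟩
  have heq := mu_swap α T T' r2 c2 r1 c1 h2 h1 hcc hT'
  rw [e1, e2] at heq
  have h3 : c1 * (i + 1) = c1 * i + c1 := Nat.mul_succ _ _
  have h4 : c2 * (i + 1) = c2 * i + c2 := Nat.mul_succ _ _
  linarith

lemma exists_sink_aux (α : List ℕ) :
    ∀ N (T : SRCT α), mu α T ≤ N →
      ∃ Tk : SRCT α, stWord α Tk = stWord α T ∧ IsSink α Tk := by
  intro N
  induction N with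
  | zero =>
    intro T h
    by_cases hs : IsSink α T
    · exact ⟨T, rfl, hs⟩
    · obtain ⟨T', _, hmu⟩ := sink_step α T hs
      omega
  | succ n ih =>
    intro T h
    by_cases hs : IsSink α T
    · exact ⟨T, rfl, hs⟩
    · obtain ⟨T', hst, hmu⟩ := sink_step α T hs
      obtain ⟨Tk, hk1, hk2⟩ := ih T' (by omega)
      exact ⟨Tk, hk1.trans hst, hk2⟩

lemma exists_source_aux (α : List ℕ) :
    ∀ N (T : SRCT α), muBound α ≤ mu α T + N →
      ∃ Ts : SRCT α, stWord α Ts = stWord α T ∧ IsSource α Ts := by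
  intro N
  induction N with
  | zero =>
    intro T h
    by_cases hs : IsSource α T
    · exact ⟨T, rfl, hs⟩
    · obtain ⟨T', _, hmu⟩ := source_step α T hs
      have := mu_le α T'
      omega
  | succ n ih =>
    intro T h
    by_cases hs : IsSource α T
    · exact ⟨T, rfl, hs⟩
    · obtain ⟨T', hst, hmu⟩ := source_step α T hs
      obtain ⟨Ts, hk1, hk2⟩ := ih T' (by omega)
      exact ⟨Ts, hk1.trans hst, hk2⟩

/-- Every `∼_α`-equivalence class contains at least one source tableau and at least one
sink tableau. -/
theorem class_has_source_and_sink (n : ℕ) (α : List ℕ) (hpos : ∀ a ∈ α, 0 < a)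
    (hsum : α.sum = n) (T : SRCT α) :
    (∃ Ts ∈ stClass α T, IsSource α Ts) ∧ (∃ Tk ∈ stClass α T, IsSink α Tk) := by
  constructor
  · obtain ⟨Ts, hs1, hs2⟩ := exists_source_aux α (muBound α) T (by have := mu_le α T; omega)
    exact ⟨Ts, hs1, hs2⟩
  · obtain ⟨Tk, hk1, hk2⟩ := exists_sink_aux α (mu α T) T le_rfl
    exact ⟨Tk, hk1, hk2⟩
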